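/- Let k ≥ 1, c an integer, and work in the commutative ring R = ℤ[x,y]/(x², y^{2k+1} + c·x·y^{2k−1}). Then ((2k+1)y² − 2cx)^{k+1} = −(4k+3)(2k+1)^k · c · x·y^{2k}. -/

import Mathlib

open MvPolynomial

/-- The ideal (x², y^{2k+1} + c·x·y^{2k−1}) in ℤ[x,y], with x = X 0, y = X 1. -/
noncomputable def relIdealZ (c : ℤ) (k : ℕ) : Ideal (MvPolynomial (Fin 2) ℤ) :=
  Ideal.span {X 0 ^ 2, X 1 ^ (2 * k + 1) + C c * X 0 * X 1 ^ (2 * k - 1)}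

/-- Binomial with square-zero part. -/
lemma pow_add_sq_zero {R : Type*} [CommRing R] (u v : R) (hv : v ^ 2 = 0) (n : ℕ) :
    (u + v) ^ (n + 1) = u ^ (n + 1) + ((n : R) + 1) * u ^ n * v := by
  induction n with
  | zero => ring
  | succ n ih =>
    have h : (u + v) ^ (n + 1 + 1) = (u + v) ^ (n + 1) * (u + v) := by ring
    rw [h, ih]
    push_cast
    linear_combination ((n : R) + 1) * u ^ n * hv

/-- In R = ℤ[x,y]/(x², y^{2k+1} + c·x·y^{2k−1}) with k ≥ 1,
((2k+1)y² − 2cx)^{k+1} = −(4k+3)(2k+1)^k·c·x·y^{2k}  (Lemma 3.2). -/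
theorem stmt_4 (k : ℕ) (hk : 1 ≤ k) (c : ℤ) :
    Ideal.Quotient.mk (relIdealZ c k)
        ((C (2 * (k : ℤ) + 1) * X 1 ^ 2 - C (2 * c) * X 0) ^ (k + 1)) =
    Ideal.Quotient.mk (relIdealZ c k)
        (- (C ((4 * (k : ℤ) + 3) * (2 * (k : ℤ) + 1) ^ k * c) * X 0 * X 1 ^ (2 * k))) := by
  set f := Ideal.Quotient.mk (relIdealZ c k) with hf
  set Q := MvPolynomial (Fin 2) ℤ ⧸ relIdealZ c k
  set x := f (X 0) with hxdef
  set y := f (X 1) with hydef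
  have hC : ∀ z : ℤ, f (C z) = (z : Q) := by
    intro z
    have := eq_intCast (f.comp C) z
    simpa using this
  have hx : x ^ 2 = 0 := by
    rw [hxdef, ← map_pow, hf, Ideal.Quotient.eq_zero_iff_mem]
    exact Ideal.subset_span (by simp [Set.mem_insert_iff])
  have hy : y ^ (2 * k + 1) = -(c : Q) * x * y ^ (2 * k - 1) := by
    have h0 : f (X 1 ^ (2 * k + 1) + C c * X 0 * X 1 ^ (2 * k - 1)) = 0 := by
      rw [hf, Ideal.Quotient.eq_zero_iff_mem]
      exact Ideal.subset_span (by simp [Set.mem_insert_iff])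
    rw [map_add, map_mul, map_mul, map_pow, map_pow, hC] at h0
    linear_combination h0
  have h2 : 2 * k - 1 + 1 = 2 * k := by omega
  have hyy : y ^ (2 * k + 2) = -(c : Q) * x * y ^ (2 * k) := by
    calc y ^ (2 * k + 2) = y ^ (2 * k + 1) * y := by ring
    _ = -(c : Q) * x * y ^ (2 * k - 1) * y := by rw [hy]
    _ = -(c : Q) * x * y ^ (2 * k - 1 + 1) := by ring
    _ = -(c : Q) * x * y ^ (2 * k) := by rw [h2]
  have hv : (-(((2 * c : ℤ) : Q)) * x) ^ 2 = 0 := by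
    linear_combination (((2 * c : ℤ) : Q)) ^ 2 * hx
  have key := pow_add_sq_zero (((2 * (k : ℤ) + 1 : ℤ) : Q) * y ^ 2)
      (-(((2 * c : ℤ) : Q)) * x) hv k
  simp only [map_pow, map_sub, map_mul, map_neg, hC]
  rw [← hxdef, ← hydef]
  rw [mul_pow, mul_pow, ← pow_mul, ← pow_mul, show 2 * (k + 1) = 2 * k + 2 from by ring] at key
  push_cast at key hyy ⊢
  have e1 : (((2 * (k : ℤ)) : ℤ) : Q) = 2 * (k : Q) := by
    erw [Int.cast_mul, Int.cast_ofNat, Int.cast_natCast]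
  have e2 : (((4 * (k : ℤ)) : ℤ) : Q) = 4 * (k : Q) := by
    erw [Int.cast_mul, Int.cast_ofNat, Int.cast_natCast]
  have e3 : (((2 * c) : ℤ) : Q) = 2 * (c : Q) := by
    exact (Int.cast_mul _ _).trans (by rw [Int.cast_ofNat])
  rw [e1, e3] at key
  simp only [e1, e2, e3]
  linear_combination key + (2 * (k : Q) + 1) ^ (k + 1) * hyy
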